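/- Let φ : ℝ⁺ → ℝ⁺ be continuous and positive with ∫₀^∞ s/φ(s) ds = ∞, and let u : [a,b] → ℝ be C² with |u''(t)| ≤ φ(|u'(t)|) whenever u'(t) ≠ 0, and |u(t)| ≤ M on [a,b]. Then there is a constant K, depending only on φ, M, and b − a, such that |u'(t)| ≤ K for all t ∈ [a,b]. -/

import Mathlib

open Set MeasureTheory intervalIntegral

noncomputable def Fprim (φ : ℝ → ℝ) (x : ℝ) : ℝ := ∫ s in (0:ℝ)..x, s / φ s

section FLemmas

variable {φ : ℝ → ℝ} (hφ_cont : ContinuousOn φ (Set.Ici 0))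
  (hφ_pos : ∀ s, 0 ≤ s → 0 < φ s)

include hφ_cont hφ_pos

lemma g_contOn : ContinuousOn (fun s => s / φ s) (Set.Ici 0) :=
  continuousOn_id.div hφ_cont (fun s hs => (hφ_pos s hs).ne')

lemma g_intgOn {x y : ℝ} (hx : 0 ≤ x) (hxy : x ≤ y) :
    IntervalIntegrable (fun s => s / φ s) volume x y := by
  apply ContinuousOn.intervalIntegrable
  apply (g_contOn hφ_cont hφ_pos).mono
  rw [Set.uIcc_of_le hxy]
  exact fun s hs => le_trans hx hs.1

lemma F_mono {x y : ℝ} (hx : 0 ≤ x) (hxy : x ≤ y) : Fprim φ x ≤ Fprim φ y := by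
  have h1 : Fprim φ x + ∫ s in x..y, s / φ s = Fprim φ y :=
    integral_add_adjacent_intervals (g_intgOn hφ_cont hφ_pos le_rfl hx)
      (g_intgOn hφ_cont hφ_pos hx hxy)
  have h2 : 0 ≤ ∫ s in x..y, s / φ s := by
    apply intervalIntegral.integral_nonneg hxy
    intro s hs
    have hs0 : 0 ≤ s := le_trans hx hs.1
    exact div_nonneg hs0 (hφ_pos s hs0).le
  linarith

lemma F_contOn : ContinuousOn (Fprim φ) (Set.Ici 0) := by
  intro x hx
  have hx0 : (0:ℝ) ≤ x := hx
  have h : ContinuousOn (Fprim φ) (Set.uIcc 0 (x+1)) := by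
    apply intervalIntegral.continuousOn_primitive_interval
    rw [Set.uIcc_of_le (by linarith)]
    exact ((g_contOn hφ_cont hφ_pos).mono (fun s hs => hs.1)).integrableOn_compact
      isCompact_Icc
  rw [Set.uIcc_of_le (by linarith)] at h
  have h2 := h.continuousWithinAt (Set.mem_Icc.2 ⟨hx0, by linarith⟩)
  apply h2.mono_of_mem_nhdsWithin
  have he : Set.Icc (0:ℝ) (x+1) = Set.Ici 0 ∩ Set.Iic (x+1) := (Set.Ici_inter_Iic).symm
  rw [he]
  exact Filter.inter_mem self_mem_nhdsWithin
    (mem_nhdsWithin_of_mem_nhds (Iic_mem_nhds (by linarith)))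

lemma F_hasDeriv {x : ℝ} (hx : 0 < x) : HasDerivAt (Fprim φ) (x / φ x) x := by
  apply intervalIntegral.integral_hasDerivAt_right
    (g_intgOn hφ_cont hφ_pos le_rfl hx.le)
  · exact ContinuousOn.stronglyMeasurableAtFilter isOpen_Ioi
      ((g_contOn hφ_cont hφ_pos).mono Set.Ioi_subset_Ici_self) x hx
  · exact ((g_contOn hφ_cont hφ_pos) x hx.le).continuousAt (Ici_mem_nhds hx)

lemma F_unbounded (hNagumo : ¬ MeasureTheory.IntegrableOn (fun s => s / φ s) (Set.Ioi 0))
    (C : ℝ) : ∃ x : ℝ, 0 ≤ x ∧ C < Fprim φ x := by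
  by_contra h
  push_neg at h
  apply hNagumo
  apply MeasureTheory.integrableOn_Ioi_of_intervalIntegral_norm_bounded C 0
    (f := fun s => s / φ s) (l := Filter.atTop) (b := fun n : ℕ => (n:ℝ))
  · intro n
    exact (g_intgOn hφ_cont hφ_pos le_rfl (Nat.cast_nonneg n)).1
  · exact tendsto_natCast_atTop_atTop
  · apply Filter.Eventually.of_forall
    intro n
    have heq : (∫ s in (0:ℝ)..(n:ℝ), ‖s / φ s‖) = Fprim φ (n:ℝ) := by
      apply intervalIntegral.integral_congr
      intro s hs
      rw [Set.uIcc_of_le (Nat.cast_nonneg n)] at hs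
      exact abs_of_nonneg (div_nonneg hs.1 (hφ_pos s hs.1).le)
    rw [heq]
    exact h _ (Nat.cast_nonneg n)

/-- Core monotonicity step. -/
lemma aux_mono (u v v' : ℝ → ℝ) (t₁ t₂ : ℝ) (h12 : t₁ ≤ t₂)
    (hu : ∀ t, HasDerivAt u (v t) t)
    (hv : ∀ t, HasDerivAt v (v' t) t)
    (hpos : ∀ t ∈ Set.Ioo t₁ t₂, 0 < v t)
    (hnn1 : 0 ≤ v t₁) (hnn2 : 0 ≤ v t₂)
    (hbd : ∀ t ∈ Set.Ioo t₁ t₂, |v' t| ≤ φ (v t)) :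
    Fprim φ (v t₂) - Fprim φ (v t₁) ≤ u t₂ - u t₁ := by
  have hvcontc : Continuous v := by
    have hd : Differentiable ℝ v := fun t => (hv t).differentiableAt
    exact hd.continuous
  have hucontc : Continuous u := by
    have hd : Differentiable ℝ u := fun t => (hu t).differentiableAt
    exact hd.continuous
  set H : ℝ → ℝ := fun t => Fprim φ (v t) - u t with hH
  have hnn : ∀ t ∈ Set.Icc t₁ t₂, v t ∈ Set.Ici (0:ℝ) := by
    intro t ht
    rcases eq_or_lt_of_le ht.1 with rfl | h1
    · exact hnn1
    rcases eq_or_lt_of_le ht.2 with rfl | h2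
    · exact hnn2
    exact (hpos t ⟨h1, h2⟩).le
  have hHder : ∀ t ∈ Set.Ioo t₁ t₂,
      HasDerivAt H (v t / φ (v t) * v' t - v t) t := by
    intro t ht
    exact ((F_hasDeriv hφ_cont hφ_pos (hpos t ht)).comp t (hv t)).sub (hu t)
  have hanti : AntitoneOn H (Set.Icc t₁ t₂) := by
    apply antitoneOn_of_deriv_nonpos (convex_Icc t₁ t₂)
    · apply ContinuousOn.sub
      · exact (F_contOn hφ_cont hφ_pos).comp hvcontc.continuousOn hnn
      · exact hucontc.continuousOn
    · rw [interior_Icc]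
      exact fun t ht => ((hHder t ht).differentiableAt).differentiableWithinAt
    · rw [interior_Icc]
      intro t ht
      rw [(hHder t ht).deriv]
      have h1 : 0 < φ (v t) := hφ_pos _ (hpos t ht).le
      have h2 : v t / φ (v t) * v' t ≤ v t / φ (v t) * φ (v t) := by
        apply mul_le_mul_of_nonneg_left _ (div_nonneg (hpos t ht).le h1.le)
        exact le_trans (le_abs_self _) (hbd t ht)
      rw [div_mul_cancel₀ _ h1.ne'] at h2
      linarith
  have hfin := hanti (Set.left_mem_Icc.2 h12) (Set.right_mem_Icc.2 h12) h12
  simp only [hH] at hfin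
  linarith

/-- Main contradiction lemma: bound at one point propagates forward in time. -/
lemma main_aux (M lam K : ℝ) (hM : 0 ≤ M) (hlam : 0 ≤ lam) (hlamK : lam < K)
    (hFK : Fprim φ lam + 2*M < Fprim φ K)
    (u v v' : ℝ → ℝ) (c t₀ : ℝ) (hct : c ≤ t₀)
    (hu : ∀ t, HasDerivAt u (v t) t)
    (hv : ∀ t, HasDerivAt v (v' t) t)
    (hbd : ∀ t ∈ Set.Icc c t₀, v t ≠ 0 → |v' t| ≤ φ |v t|)
    (hMu : ∀ t ∈ Set.Icc c t₀, |u t| ≤ M)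
    (hc : |v c| ≤ lam) :
    |v t₀| ≤ K := by
  by_contra hK
  push_neg at hK
  have hvcont : Continuous v := by
    have : Differentiable ℝ v := fun t => (hv t).differentiableAt
    exact this.continuous
  set w : ℝ → ℝ := fun t => |v t| with hw
  have hwcont : Continuous w := hvcont.abs
  -- first crossing of K
  set S : Set ℝ := Set.Icc c t₀ ∩ w ⁻¹' {K} with hS
  have hScomp : IsCompact S :=
    isCompact_Icc.inter_right (isClosed_singleton.preimage hwcont)
  have hSne : S.Nonempty := by
    obtain ⟨s, hs, hws⟩ := intermediate_value_Icc hct hwcont.continuousOn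
      (Set.mem_Icc.2 ⟨by simpa [hw] using le_trans hc hlamK.le, hK.le⟩)
    exact ⟨s, hs, hws⟩
  set t₂ := sInf S with ht₂def
  have ht₂S : t₂ ∈ S := hScomp.sInf_mem hSne
  have ht₂I : t₂ ∈ Set.Icc c t₀ := ht₂S.1
  have ht₂K : w t₂ = K := ht₂S.2
  have claimA : ∀ t ∈ Set.Ico c t₂, w t < K := by
    intro t ht
    by_contra hcon
    push_neg at hcon
    obtain ⟨s, hs, hws⟩ := intermediate_value_Icc ht.1 hwcont.continuousOn
      (Set.mem_Icc.2 ⟨by simpa [hw] using le_trans hc hlamK.le, hcon⟩)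
    have hsS : s ∈ S := ⟨⟨hs.1, le_trans hs.2 (le_trans ht.2.le ht₂I.2)⟩, hws⟩
    have := csInf_le hScomp.bddBelow hsS
    have : s < t₂ := lt_of_le_of_lt hs.2 ht.2
    exact absurd (csInf_le hScomp.bddBelow hsS) (not_le.2 this)
  -- last time ≤ lam before t₂
  set T : Set ℝ := Set.Icc c t₂ ∩ w ⁻¹' Set.Iic lam with hT
  have hTcomp : IsCompact T :=
    isCompact_Icc.inter_right (isClosed_Iic.preimage hwcont)
  have hTne : T.Nonempty := ⟨c, ⟨le_rfl, ht₂I.1⟩, hc⟩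
  set t₁ := sSup T with ht₁def
  have ht₁T : t₁ ∈ T := hTcomp.sSup_mem hTne
  have ht₁I : t₁ ∈ Set.Icc c t₂ := ht₁T.1
  have ht₁lam : w t₁ ≤ lam := ht₁T.2
  have claimB : ∀ t ∈ Set.Ioc t₁ t₂, lam < w t := by
    intro t ht
    by_contra hcon
    push_neg at hcon
    have : t ∈ T := ⟨⟨le_trans ht₁I.1 ht.1.le, ht.2⟩, hcon⟩
    exact absurd (le_csSup hTcomp.bddAbove this) (not_le.2 ht.1)
  have h12 : t₁ < t₂ := by
    rcases eq_or_lt_of_le ht₁I.2 with heq | h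
    · exfalso; rw [heq] at ht₁lam; rw [ht₂K] at ht₁lam; linarith
    · exact h
  have hwt₁ : w t₁ = lam := by
    rcases eq_or_lt_of_le ht₁lam with heq | hlt
    · exact heq
    exfalso
    have h1 : ∀ᶠ t in nhdsWithin t₁ (Set.Ioi t₁), w t < lam :=
      Filter.Eventually.filter_mono nhdsWithin_le_nhds
        (hwcont.continuousAt.eventually_lt continuousAt_const hlt)
    have h2 : Set.Ioo t₁ t₂ ∈ nhdsWithin t₁ (Set.Ioi t₁) :=
      Ioo_mem_nhdsGT_of_mem ⟨le_rfl, h12⟩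
    obtain ⟨t, htw, htI⟩ := (h1.and h2).exists
    exact absurd (claimB t ⟨htI.1, htI.2.le⟩) (not_lt.2 htw.le)
  have hvne : ∀ t ∈ Set.Ioc t₁ t₂, v t ≠ 0 := by
    intro t ht h0
    have := claimB t ht
    rw [hw] at this; simp only [h0, abs_zero] at this; linarith
  have hsub : Set.Icc t₁ t₂ ⊆ Set.Icc c t₀ := fun s hs =>
    ⟨le_trans ht₁I.1 hs.1, le_trans hs.2 ht₂I.2⟩
  have hKpos : 0 < K := lt_of_le_of_lt hlam hlamK
  rcases (hvne t₂ ⟨h12, le_rfl⟩).lt_or_gt with hneg | hpos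
  · -- v t₂ < 0 : work with -v
    have hvneg : ∀ t ∈ Set.Ioo t₁ t₂, v t < 0 := by
      intro t ht
      rcases (hvne t ⟨ht.1, ht.2.le⟩).lt_or_gt with h | h
      · exact h
      exfalso
      obtain ⟨s, hs, hvs⟩ := intermediate_value_Icc' ht.2.le hvcont.continuousOn
        (Set.mem_Icc.2 ⟨hneg.le, h.le⟩)
      exact hvne s ⟨lt_of_lt_of_le ht.1 hs.1, hs.2⟩ hvs
    have hvt₁ : v t₁ = -lam := by
      rcases (abs_eq hlam).1 hwt₁ with h | h
      · rcases eq_or_lt_of_le hlam with heq | hlt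
        · rw [h, ← heq, neg_zero]
        exfalso
        obtain ⟨s, hs, hvs⟩ := intermediate_value_Icc' h12.le hvcont.continuousOn
          (Set.mem_Icc.2 ⟨hneg.le, by rw [h]; exact hlt.le⟩)
        have hs1 : t₁ < s := by
          rcases eq_or_lt_of_le hs.1 with rfl | hh
          · exfalso; rw [hvs] at h; linarith
          · exact hh
        exact hvne s ⟨hs1, hs.2⟩ hvs
      · exact h
    have hvt₂ : v t₂ = -K := by
      have : |v t₂| = K := ht₂K
      rcases (abs_eq hKpos.le).1 this with h | h
      · exfalso; rw [h] at hneg; linarith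
      · exact h
    have key := aux_mono hφ_cont hφ_pos (fun t => -u t) (fun t => -v t)
      (fun t => -v' t) t₁ t₂ h12.le (fun t => (hu t).neg) (fun t => (hv t).neg)
      (fun t ht => by simpa using (hvneg t ht))
      (by show (0:ℝ) ≤ -v t₁; rw [hvt₁, neg_neg]; exact hlam)
      (by show (0:ℝ) ≤ -v t₂; rw [hvt₂, neg_neg]; exact hKpos.le)
      (fun t ht => by
        have h1 := hbd t (hsub (Set.Ioo_subset_Icc_self ht)) (hvne t ⟨ht.1, ht.2.le⟩)
        have h2 : |v t| = -v t := abs_of_neg (hvneg t ht)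
        simpa [h2] using h1)
    simp only [hvt₁, hvt₂, neg_neg] at key
    have hb1 := hMu t₁ (hsub (Set.left_mem_Icc.2 h12.le))
    have hb2 := hMu t₂ (hsub (Set.right_mem_Icc.2 h12.le))
    rw [abs_le] at hb1 hb2
    linarith
  · -- 0 < v t₂
    have hvpos : ∀ t ∈ Set.Ioo t₁ t₂, 0 < v t := by
      intro t ht
      rcases (hvne t ⟨ht.1, ht.2.le⟩).lt_or_gt with h | h
      · exfalso
        obtain ⟨s, hs, hvs⟩ := intermediate_value_Icc ht.2.le hvcont.continuousOn
          (Set.mem_Icc.2 ⟨h.le, hpos.le⟩)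
        exact hvne s ⟨lt_of_lt_of_le ht.1 hs.1, hs.2⟩ hvs
      · exact h
    have hvt₁ : v t₁ = lam := by
      rcases (abs_eq hlam).1 hwt₁ with h | h
      · exact h
      · rcases eq_or_lt_of_le hlam with heq | hlt
        · rw [h, ← heq, neg_zero]
        exfalso
        obtain ⟨s, hs, hvs⟩ := intermediate_value_Icc h12.le hvcont.continuousOn
          (Set.mem_Icc.2 ⟨by rw [h]; linarith, hpos.le⟩)
        have hs1 : t₁ < s := by
          rcases eq_or_lt_of_le hs.1 with rfl | hh
          · exfalso; rw [hvs] at h; linarith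
          · exact hh
        exact hvne s ⟨hs1, hs.2⟩ hvs
    have hvt₂ : v t₂ = K := by
      have : |v t₂| = K := ht₂K
      rcases (abs_eq hKpos.le).1 this with h | h
      · exact h
      · exfalso; rw [h] at hpos; linarith
    have key := aux_mono hφ_cont hφ_pos u v v' t₁ t₂ h12.le hu hv hvpos
      (by rw [hvt₁]; exact hlam) (by rw [hvt₂]; exact hKpos.le)
      (fun t ht => by
        have h1 := hbd t (hsub (Set.Ioo_subset_Icc_self ht)) (hvne t ⟨ht.1, ht.2.le⟩)
        have h2 : |v t| = v t := abs_of_pos (hvpos t ht)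
        simpa [h2] using h1)
    rw [hvt₁, hvt₂] at key
    have hb1 := hMu t₁ (hsub (Set.left_mem_Icc.2 h12.le))
    have hb2 := hMu t₂ (hsub (Set.right_mem_Icc.2 h12.le))
    rw [abs_le] at hb1 hb2
    linarith

end FLemmas

/-- Nagumo a priori gradient bound: if `φ` is continuous and positive on
`(0,∞)` with `∫₀^∞ s/φ(s) ds = ∞` (formalized as non-integrability of the
positive integrand on `(0,∞)`), then there is `K = K(φ, M, b−a)` bounding
`|u'|` for every `C²` function `u` on an interval of length `b − a` with
`|u| ≤ M` and `|u''| ≤ φ(|u'|)`. -/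
theorem stmt_13
    (φ : ℝ → ℝ) (hφ_cont : ContinuousOn φ (Set.Ici 0))
    (hφ_pos : ∀ s, 0 ≤ s → 0 < φ s)
    (hNagumo : ¬ MeasureTheory.IntegrableOn (fun s => s / φ s) (Set.Ioi 0))
    (M : ℝ) (hM : 0 ≤ M) (ℓ : ℝ) (hℓ : 0 < ℓ) :
    ∃ K : ℝ, ∀ a b : ℝ, a < b → b - a = ℓ →
      ∀ u : ℝ → ℝ, ContDiff ℝ 2 u →
        (∀ t ∈ Set.Icc a b, deriv u t ≠ 0 → |deriv (deriv u) t| ≤ φ |deriv u t|) →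
        (∀ t ∈ Set.Icc a b, |u t| ≤ M) →
        ∀ t ∈ Set.Icc a b, |deriv u t| ≤ K := by
  set lam := 2*M/ℓ with hlamdef
  have hlam : 0 ≤ lam := div_nonneg (by linarith) hℓ.le
  obtain ⟨x₀, hx₀0, hx₀⟩ := F_unbounded hφ_cont hφ_pos hNagumo (Fprim φ lam + 2*M)
  set K := max x₀ (lam+1) with hKdef
  have hlamK : lam < K := lt_of_lt_of_le (lt_add_one lam) (le_max_right _ _)
  have hFK : Fprim φ lam + 2*M < Fprim φ K :=
    lt_of_lt_of_le hx₀ (F_mono hφ_cont hφ_pos hx₀0 (le_max_left _ _))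
  refine ⟨K, ?_⟩
  intro a b hab hba u hu hf hMu t ht
  have hud : Differentiable ℝ u := hu.differentiable (by norm_num)
  have hu1 : ContDiff ℝ 1 (deriv u) := by
    have h2 : ContDiff ℝ ((1:ℕ) + 1) u := by exact_mod_cast hu
    exact (contDiff_succ_iff_deriv.mp h2).2.2
  have hu' : ∀ s, HasDerivAt u (deriv u s) s := fun s => (hud s).hasDerivAt
  have hv' : ∀ s, HasDerivAt (deriv u) (deriv (deriv u) s) s := fun s =>
    ((hu1.differentiable (by norm_num)) s).hasDerivAt
  obtain ⟨c, hcmem, hceq⟩ := exists_deriv_eq_slope u hab hud.continuous.continuousOn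
    (hud.differentiableOn)
  have hvc : |deriv u c| ≤ lam := by
    rw [hceq, abs_div, abs_of_pos (by linarith : (0:ℝ) < b - a), hba]
    have h1 := hMu a (Set.left_mem_Icc.2 hab.le)
    have h2 := hMu b (Set.right_mem_Icc.2 hab.le)
    rw [abs_le] at h1 h2
    have h3 : |u b - u a| ≤ 2*M := by rw [abs_le]; constructor <;> linarith
    rw [hlamdef]; gcongr
  rcases le_total c t with hct | htc
  · exact main_aux hφ_cont hφ_pos M lam K hM hlam hlamK hFK u (deriv u)
      (deriv (deriv u)) c t hct hu' hv'
      (fun s hs => hf s ⟨le_trans hcmem.1.le hs.1, le_trans hs.2 ht.2⟩)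
      (fun s hs => hMu s ⟨le_trans hcmem.1.le hs.1, le_trans hs.2 ht.2⟩) hvc
  · -- reflect time
    have hU : ∀ s, HasDerivAt (fun s => u (-s)) (-(deriv u (-s))) s := by
      intro s
      have := (hu' (-s)).comp s (hasDerivAt_neg s)
      simpa [mul_comm, Function.comp_def] using this
    have hV : ∀ s, HasDerivAt (fun s => -(deriv u (-s))) (deriv (deriv u) (-s)) s := by
      intro s
      have := ((hv' (-s)).comp s (hasDerivAt_neg s)).neg
      simpa [mul_comm, Function.comp_def, Pi.neg_def] using this
    have hmem : ∀ s ∈ Set.Icc (-c) (-t), -s ∈ Set.Icc a b := by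
      intro s hs
      simp only [Set.mem_Icc] at hs ⊢
      constructor
      · linarith [ht.1]
      · linarith [hcmem.2]
    have key := main_aux hφ_cont hφ_pos M lam K hM hlam hlamK hFK
      (fun s => u (-s)) (fun s => -(deriv u (-s))) (fun s => deriv (deriv u) (-s))
      (-c) (-t) (by linarith) hU hV
      (fun s hs hne => by
        have h1 := hf (-s) (hmem s hs) (by simpa using hne)
        simpa using h1)
      (fun s hs => hMu (-s) (hmem s hs)) (by simpa using hvc)
    simpa using key
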